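/- Let K be a perfect field of characteristic p > 0. For every σ ∈ Aut_K(A_1), the degree of the restricted automorphism res(σ) of Z = K[X, Y] equals the degree of σ; that is, max(deg_{X,Y} σ(x^p), deg_{X,Y} σ(∂^p)) = max(deg σ(x), deg σ(∂)), where on the left σ(x^p) and σ(∂^p) are regarded as polynomials in X = x^p and Y = ∂^p, and on the right deg denotes the total degree of an element of A_1 written in the basis {x^i ∂^j}. -/

import Mathlib

/-!
STATEMENT 5: Let `K` be a perfect field of characteristic `p > 0`.  For every
`σ ∈ Aut_K(A₁)`, the degree of the restricted automorphism `res(σ)` of `Z = K[X, Y]`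
equals the degree of `σ`:
`max(deg_{X,Y} σ(x^p), deg_{X,Y} σ(∂^p)) = max(deg σ(x), deg σ(∂))`.

The centre is identified with `K[X, Y]` via `ψ` (`X = x^p`, `Y = ∂^p`); the degree of an
element of `A₁` is defined via the filtration by spans of `{x^i ∂^j : i + j ≤ n}`.
-/

noncomputable section

/-- The defining relation of the first Weyl algebra: `∂·x = x·∂ + 1`. -/
inductive WeylRel (K : Type*) [CommRing K] :
    FreeAlgebra K (Fin 2) → FreeAlgebra K (Fin 2) → Prop
  | rel : WeylRel K (FreeAlgebra.ι K 1 * FreeAlgebra.ι K 0)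
      (FreeAlgebra.ι K 0 * FreeAlgebra.ι K 1 + 1)

/-- The first Weyl algebra `A₁(K) = K⟨x, ∂ | ∂x − x∂ = 1⟩`. -/
abbrev Weyl (K : Type*) [CommRing K] := RingQuot (WeylRel K)

/-- The generator `x` of the first Weyl algebra. -/
def wX (K : Type*) [CommRing K] : Weyl K :=
  RingQuot.mkAlgHom K (WeylRel K) (FreeAlgebra.ι K 0)

/-- The generator `∂` of the first Weyl algebra. -/
def wD (K : Type*) [CommRing K] : Weyl K :=
  RingQuot.mkAlgHom K (WeylRel K) (FreeAlgebra.ι K 1)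

/-- The degree of an element of `A₁` in the basis `{x^i ∂^j}`: the least `n` such that the
element lies in the `K`-span of `{x^i ∂^j : i + j ≤ n}`. -/
def wdeg (K : Type*) [CommRing K] (a : Weyl K) : ℕ :=
  sInf {n : ℕ | a ∈ Submodule.span K {w : Weyl K | ∃ i j : ℕ, i + j ≤ n ∧ w = wX K ^ i * wD K ^ j}}

namespace W5
open MvPolynomial

variable (K : Type*) [Field K]

abbrev P := MvPolynomial (Fin 2) K

/-- multiplication by `t = X 0` -/
def T : Module.End K (P K) := LinearMap.mulLeft K (X 0)

/-- `∂/∂t + s·` -/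
def D : Module.End K (P K) := (pderiv 0).toLinearMap + LinearMap.mulLeft K (X 1)

lemma DT_comm : D K * T K = T K * D K + 1 := by
  apply LinearMap.ext; intro f
  simp only [D, T, Module.End.mul_apply, LinearMap.add_apply, LinearMap.mulLeft_apply,
    Derivation.coeFn_coe, Module.End.one_apply, LinearMap.add_apply, pderiv_mul, pderiv_X_self]
  ring

/-- the representation of the Weyl algebra on `K[t,s]` -/
def ρ : Weyl K →ₐ[K] Module.End K (P K) :=
  RingQuot.liftAlgHom K ⟨FreeAlgebra.lift K ![T K, D K], by
    rintro _ _ ⟨⟩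
    simp only [map_mul, map_add, map_one, FreeAlgebra.lift_ι_apply]
    show D K * T K = T K * D K + 1
    exact DT_comm K⟩

lemma ρ_wX : ρ K (wX K) = T K := by
  rw [wX, ρ, RingQuot.liftAlgHom_mkAlgHom_apply, FreeAlgebra.lift_ι_apply]
  rfl

lemma ρ_wD : ρ K (wD K) = D K := by
  rw [wD, ρ, RingQuot.liftAlgHom_mkAlgHom_apply, FreeAlgebra.lift_ι_apply]
  rfl

/-- evaluation of the representation at `1`, the "symbol" map -/
def Φ : Weyl K →ₗ[K] P K := (LinearMap.applyₗ (1 : P K)).comp (ρ K).toLinearMap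

lemma Φ_apply (a : Weyl K) : Φ K a = ρ K a 1 := rfl

lemma D_pow_one (j : ℕ) : (D K ^ j) 1 = X 1 ^ j := by
  induction j with
  | zero => simp
  | succ j ih =>
    rw [pow_succ', Module.End.mul_apply, ih, D]
    simp [pderiv_pow, pderiv_X_of_ne (show (1 : Fin 2) ≠ 0 by decide), pow_succ, mul_comm]

lemma Φ_mono (i j : ℕ) : Φ K (wX K ^ i * wD K ^ j) = X 0 ^ i * X 1 ^ j := by
  rw [Φ_apply, map_mul, map_pow, map_pow, ρ_wX, ρ_wD, Module.End.mul_apply,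
    D_pow_one, T, LinearMap.pow_mulLeft, LinearMap.mulLeft_apply]

end W5
namespace W5
open MvPolynomial
variable (K : Type*) [Field K]

/-- the filtration of the Weyl algebra -/
def FF (n : ℕ) : Submodule K (Weyl K) :=
  Submodule.span K {w : Weyl K | ∃ i j : ℕ, i + j ≤ n ∧ w = wX K ^ i * wD K ^ j}

lemma gen_mem_FF {i j n : ℕ} (h : i + j ≤ n) : wX K ^ i * wD K ^ j ∈ FF K n :=
  Submodule.subset_span ⟨i, j, h, rfl⟩

lemma FF_mono {m n : ℕ} (h : m ≤ n) : FF K m ≤ FF K n :=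
  Submodule.span_mono (fun w ⟨i, j, hij, hw⟩ => ⟨i, j, hij.trans h, hw⟩)

lemma wd_wx : wD K * wX K = wX K * wD K + 1 := by
  have := RingQuot.mkAlgHom_rel K (WeylRel.rel (K := K))
  simpa only [map_mul, map_add, map_one, wX, wD] using this

/-- commutation: `∂ xⁱ = xⁱ ∂ + i x^(i-1)` -/
lemma wd_wx_pow (i : ℕ) :
    wD K * wX K ^ i = wX K ^ i * wD K + (i : K) • wX K ^ (i - 1) := by
  induction i with
  | zero => simp
  | succ i ih =>
    rcases Nat.eq_zero_or_pos i with rfl | hi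
    · simp [wd_wx]
    have h1 : i - 1 + 1 = i := by omega
    calc wD K * wX K ^ (i+1) = (wD K * wX K ^ i) * wX K := by rw [pow_succ, mul_assoc]
      _ = (wX K ^ i * wD K + (i:K) • wX K ^ (i-1)) * wX K := by rw [ih]
      _ = wX K ^ i * (wD K * wX K) + (i:K) • (wX K ^ (i-1) * wX K) := by
          rw [add_mul, mul_assoc, smul_mul_assoc]
      _ = (wX K ^ i * (wX K * wD K) + wX K ^ i) + (i:K) • (wX K ^ (i-1) * wX K) := by
          rw [wd_wx, mul_add, mul_one]
      _ = (wX K ^ (i+1) * wD K + wX K ^ i) + (i:K) • wX K ^ i := by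
          rw [← mul_assoc, ← pow_succ, ← pow_succ, h1]
      _ = wX K ^ (i+1) * wD K + ((i:K) + 1) • wX K ^ i := by
          rw [add_smul, one_smul]; abel
      _ = wX K ^ (i+1) * wD K + ((i+1 : ℕ) : K) • wX K ^ (i+1-1) := by
          push_cast; simp
lemma wx_mul_FF {n : ℕ} {a : Weyl K} (h : a ∈ FF K n) : wX K * a ∈ FF K (n + 1) := by
  induction h using Submodule.span_induction with
  | mem w hw =>
    obtain ⟨i, j, hij, rfl⟩ := hw
    rw [← mul_assoc, ← pow_succ']
    exact gen_mem_FF K (by omega)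
  | zero => simp
  | add x y hx hy ihx ihy => rw [mul_add]; exact add_mem ihx ihy
  | smul c x hx ihx => rw [mul_smul_comm]; exact Submodule.smul_mem _ _ ihx

lemma wd_mul_FF {n : ℕ} {a : Weyl K} (h : a ∈ FF K n) : wD K * a ∈ FF K (n + 1) := by
  induction h using Submodule.span_induction with
  | mem w hw =>
    obtain ⟨i, j, hij, rfl⟩ := hw
    rw [← mul_assoc, wd_wx_pow, add_mul, mul_assoc, ← pow_succ', smul_mul_assoc]
    exact add_mem (gen_mem_FF K (by omega))
      (Submodule.smul_mem _ _ (gen_mem_FF K (by omega)))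
  | zero => simp
  | add x y hx hy ihx ihy => rw [mul_add]; exact add_mem ihx ihy
  | smul c x hx ihx => rw [mul_smul_comm]; exact Submodule.smul_mem _ _ ihx

lemma FF_mul_wd {n : ℕ} {a : Weyl K} (h : a ∈ FF K n) : a * wD K ∈ FF K (n + 1) := by
  induction h using Submodule.span_induction with
  | mem w hw =>
    obtain ⟨i, j, hij, rfl⟩ := hw
    rw [mul_assoc, ← pow_succ]
    exact gen_mem_FF K (by omega)
  | zero => simp
  | add x y hx hy ihx ihy => rw [add_mul]; exact add_mem ihx ihy
  | smul c x hx ihx => rw [smul_mul_assoc]; exact Submodule.smul_mem _ _ ihx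

lemma wx_pow_mul_FF {n : ℕ} (i : ℕ) {a : Weyl K} (h : a ∈ FF K n) :
    wX K ^ i * a ∈ FF K (n + i) := by
  induction i with
  | zero => simpa using h
  | succ i ih =>
    rw [pow_succ', mul_assoc]
    exact (show n + i + 1 = n + (i+1) by omega) ▸ wx_mul_FF K ih

lemma FF_mul_wd_pow {n : ℕ} (l : ℕ) {a : Weyl K} (h : a ∈ FF K n) :
    a * wD K ^ l ∈ FF K (n + l) := by
  induction l with
  | zero => simpa using h
  | succ l ih =>
    rw [pow_succ, ← mul_assoc]
    exact FF_mul_wd K ih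

/-- commutator estimate -/
lemma comm_mem_FF (j k : ℕ) :
    wD K ^ j * wX K ^ k - wX K ^ k * wD K ^ j ∈ FF K (j + k - 1) := by
  induction j with
  | zero => simp
  | succ j ih =>
    set d := wD K ^ j * wX K ^ k - wX K ^ k * wD K ^ j with hd
    have key : wD K ^ (j+1) * wX K ^ k
        = wX K ^ k * wD K ^ (j+1)
          + ((k : K) • (wX K ^ (k-1) * wD K ^ j) + wD K * d) := by
      calc wD K ^ (j+1) * wX K ^ k = wD K * (wD K ^ j * wX K ^ k) := by
            rw [pow_succ', mul_assoc]
        _ = wD K * (wX K ^ k * wD K ^ j + d) := by rw [hd, add_sub_cancel]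
        _ = (wD K * wX K ^ k) * wD K ^ j + wD K * d := by rw [mul_add, mul_assoc]
        _ = (wX K ^ k * wD K + (k:K) • wX K ^ (k-1)) * wD K ^ j + wD K * d := by
            rw [wd_wx_pow]
        _ = wX K ^ k * wD K ^ (j+1)
            + ((k : K) • (wX K ^ (k-1) * wD K ^ j) + wD K * d) := by
            rw [add_mul, smul_mul_assoc, mul_assoc, ← pow_succ', add_assoc]
    rw [key, add_sub_cancel_left]
    have h1 : (k : K) • (wX K ^ (k-1) * wD K ^ j) ∈ FF K (j + 1 + k - 1) :=
      Submodule.smul_mem _ _ (gen_mem_FF K (by omega))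
    have h2 : wD K * d ∈ FF K (j + 1 + k - 1) := by
      rcases Nat.eq_zero_or_pos (j + k) with h0 | h0
      · obtain ⟨rfl, rfl⟩ : j = 0 ∧ k = 0 := by omega
        simp [hd]
      · exact FF_mono K (by omega) (wd_mul_FF K ih)
    exact add_mem h1 h2

/-- product of generators modulo lower order -/
lemma mul_gen_sub (i j k l : ℕ) :
    (wX K ^ i * wD K ^ j) * (wX K ^ k * wD K ^ l) - wX K ^ (i+k) * wD K ^ (j+l)
      ∈ FF K (i + j + k + l - 1) := by
  rcases Nat.eq_zero_or_pos (j + k) with h0 | h0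
  · obtain ⟨rfl, rfl⟩ : j = 0 ∧ k = 0 := by omega
    simp
  set d := wD K ^ j * wX K ^ k - wX K ^ k * wD K ^ j with hd
  have key : (wX K ^ i * wD K ^ j) * (wX K ^ k * wD K ^ l)
      = wX K ^ (i+k) * wD K ^ (j+l) + wX K ^ i * (d * wD K ^ l) := by
    calc (wX K ^ i * wD K ^ j) * (wX K ^ k * wD K ^ l)
        = wX K ^ i * ((wD K ^ j * wX K ^ k) * wD K ^ l) := by
          rw [mul_assoc, mul_assoc]
      _ = wX K ^ i * ((wX K ^ k * wD K ^ j + d) * wD K ^ l) := by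
          rw [hd, add_sub_cancel]
      _ = wX K ^ i * (wX K ^ k * (wD K ^ j * wD K ^ l)) + wX K ^ i * (d * wD K ^ l) := by
          rw [add_mul, mul_add, mul_assoc]
      _ = wX K ^ (i+k) * wD K ^ (j+l) + wX K ^ i * (d * wD K ^ l) := by
          rw [← mul_assoc, ← pow_add, ← pow_add]
  rw [key, add_sub_cancel_left]
  have h1 : d * wD K ^ l ∈ FF K (j + k - 1 + l) := FF_mul_wd_pow K l (comm_mem_FF K j k)
  have h2 := wx_pow_mul_FF K i h1
  exact FF_mono K (by omega) h2

lemma gen_mul_FF {n : ℕ} (i j : ℕ) {b : Weyl K} (hb : b ∈ FF K n) :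
    (wX K ^ i * wD K ^ j) * b ∈ FF K (i + j + n) := by
  induction hb using Submodule.span_induction with
  | mem w hw =>
    obtain ⟨k, l, hkl, rfl⟩ := hw
    have h1 := mul_gen_sub K i j k l
    have h2 : wX K ^ (i+k) * wD K ^ (j+l) ∈ FF K (i+j+n) := gen_mem_FF K (by omega)
    have := add_mem (FF_mono K (show i+j+k+l-1 ≤ i+j+n by omega) h1) h2
    simpa using this
  | zero => simp
  | add x y hx hy ihx ihy => rw [mul_add]; exact add_mem ihx ihy
  | smul c x hx ihx => rw [mul_smul_comm]; exact Submodule.smul_mem _ _ ihx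

lemma FF_mul {m n : ℕ} {a b : Weyl K} (ha : a ∈ FF K m) (hb : b ∈ FF K n) :
    a * b ∈ FF K (m + n) := by
  induction ha using Submodule.span_induction with
  | mem w hw =>
    obtain ⟨i, j, hij, rfl⟩ := hw
    exact FF_mono K (by omega) (gen_mul_FF K i j hb)
  | zero => simp
  | add x y hx hy ihx ihy => rw [add_mul]; exact add_mem ihx ihy
  | smul c x hx ihx => rw [smul_mul_assoc]; exact Submodule.smul_mem _ _ ihx

end W5
namespace W5
open MvPolynomial
variable (K : Type*) [Field K]

lemma Φ_one : Φ K 1 = 1 := by simpa using Φ_mono K 0 0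

lemma adjoin_xd : Algebra.adjoin K {wX K, wD K} = ⊤ := by
  have h2 := AlgHom.map_adjoin (RingQuot.mkAlgHom K (WeylRel K))
    (Set.range (FreeAlgebra.ι K (X := Fin 2)))
  rw [FreeAlgebra.adjoin_range_ι, Algebra.map_top] at h2
  have h3 : (RingQuot.mkAlgHom K (WeylRel K)).range = ⊤ :=
    (AlgHom.range_eq_top _).2 (RingQuot.mkAlgHom_surjective K _)
  have h4 : ⇑(RingQuot.mkAlgHom K (WeylRel K)) '' Set.range (FreeAlgebra.ι K)
      = {wX K, wD K} := by
    ext z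
    constructor
    · rintro ⟨_, ⟨i, rfl⟩, rfl⟩
      fin_cases i
      · left; rfl
      · right; rfl
    · rintro (rfl | rfl)
      · exact ⟨FreeAlgebra.ι K 0, ⟨0, rfl⟩, rfl⟩
      · exact ⟨FreeAlgebra.ι K 1, ⟨1, rfl⟩, rfl⟩
  rw [h3, h4] at h2
  exact h2.symm

/-- the union of the filtration as a subalgebra -/
def Sa : Subalgebra K (Weyl K) where
  carrier := {a | ∃ n, a ∈ FF K n}
  mul_mem' := by
    rintro a b ⟨m, hm⟩ ⟨n, hn⟩
    exact ⟨m + n, FF_mul K hm hn⟩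
  add_mem' := by
    rintro a b ⟨m, hm⟩ ⟨n, hn⟩
    exact ⟨m + n, add_mem (FF_mono K (Nat.le_add_right m n) hm)
      (FF_mono K (Nat.le_add_left n m) hn)⟩
  algebraMap_mem' := by
    intro r
    refine ⟨0, ?_⟩
    have h1 : (1 : Weyl K) ∈ FF K 0 := by
      simpa using gen_mem_FF K (i := 0) (j := 0) (le_refl 0)
    have := Submodule.smul_mem (FF K 0) r h1
    simpa [Algebra.algebraMap_eq_smul_one] using this

lemma exists_FF (a : Weyl K) : ∃ n, a ∈ FF K n := by
  have hS : Sa K = ⊤ := by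
    rw [← top_le_iff, ← adjoin_xd K]
    apply Algebra.adjoin_le
    rintro z (rfl | rfl)
    · exact ⟨1, by simpa using gen_mem_FF K (i := 1) (j := 0) (le_refl 1)⟩
    · exact ⟨1, by simpa using gen_mem_FF K (i := 0) (j := 1) (le_refl 1)⟩
  have : a ∈ Sa K := by rw [hS]; trivial
  exact this

/-- the inverse evaluation (linear) map -/
def β : P K →ₗ[K] Weyl K :=
  (basisMonomials (Fin 2) K).constr K (fun d => wX K ^ (d 0) * wD K ^ (d 1))

lemma β_mono (d : Fin 2 →₀ ℕ) (c : K) :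
    β K (monomial d c) = c • (wX K ^ (d 0) * wD K ^ (d 1)) := by
  have h1 : (monomial d c : P K) = c • (basisMonomials (Fin 2) K d) := by
    rw [coe_basisMonomials, smul_monomial, smul_eq_mul, mul_one]
  rw [h1, map_smul, β, Module.Basis.constr_basis]

lemma β_Φ (a : Weyl K) : β K (Φ K a) = a := by
  obtain ⟨n, hn⟩ := exists_FF K a
  induction hn using Submodule.span_induction with
  | mem w hw =>
    obtain ⟨i, j, hij, rfl⟩ := hw
    rw [Φ_mono, X_pow_eq_monomial, X_pow_eq_monomial, monomial_mul, mul_one, β_mono]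
    simp [Finsupp.single_apply]
  | zero => simp
  | add x y hx hy ihx ihy => rw [map_add, map_add, ihx, ihy]
  | smul c x hx ihx => rw [map_smul, map_smul, ihx]

lemma Φ_inj : Function.Injective (Φ K) := by
  intro a b h
  rw [← β_Φ K a, ← β_Φ K b, h]

lemma Φ_ne_zero {a : Weyl K} (ha : a ≠ 0) : Φ K a ≠ 0 := by
  intro h
  exact ha (Φ_inj K (by rw [h, map_zero]))

lemma fin2_decomp (d : Fin 2 →₀ ℕ) :
    (Finsupp.single (0 : Fin 2) (d 0)) + Finsupp.single 1 (d 1) = d := by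
  ext i
  fin_cases i <;> simp [Finsupp.single_apply]

lemma mono_eq (d : Fin 2 →₀ ℕ) (c : K) :
    (monomial d c : P K) = c • (X 0 ^ (d 0) * X 1 ^ (d 1)) := by
  rw [X_pow_eq_monomial, X_pow_eq_monomial, monomial_mul, mul_one, smul_monomial,
    smul_eq_mul, mul_one, fin2_decomp]

lemma sum2 (d : Fin 2 →₀ ℕ) : (d.sum fun _ e => e) = d 0 + d 1 := by
  rw [Finsupp.sum_fintype _ _ (fun _ => rfl)]
  exact Fin.sum_univ_two _

lemma degree2 (d : Fin 2 →₀ ℕ) : d.degree = d 0 + d 1 := by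
  rw [show d.degree = d.sum fun _ e => e from rfl, sum2]

lemma Φ_FF {n : ℕ} {a : Weyl K} (h : a ∈ FF K n) : (Φ K a).totalDegree ≤ n := by
  induction h using Submodule.span_induction with
  | mem w hw =>
    obtain ⟨i, j, hij, rfl⟩ := hw
    rw [Φ_mono, X_pow_eq_monomial, X_pow_eq_monomial, monomial_mul, mul_one]
    refine le_trans (totalDegree_monomial_le _ _) (le_trans (le_of_eq (sum2 _)) ?_)
    simp [Finsupp.single_apply]
    omega
  | zero => simp
  | add x y hx hy ihx ihy =>
    rw [map_add]
    exact le_trans (totalDegree_add _ _) (by simp [ihx, ihy])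
  | smul c x hx ihx =>
    rw [map_smul]
    exact le_trans (totalDegree_smul_le _ _) ihx

lemma FF_iff {n : ℕ} {a : Weyl K} : a ∈ FF K n ↔ (Φ K a).totalDegree ≤ n := by
  refine ⟨Φ_FF K, fun h => ?_⟩
  set f := Φ K a with hf
  have hb : (∑ d ∈ f.support, (coeff d f) • (wX K ^ (d 0) * wD K ^ (d 1))) ∈ FF K n := by
    apply Submodule.sum_mem
    intro d hd
    apply Submodule.smul_mem
    apply gen_mem_FF
    have := le_totalDegree (p := f) hd
    rw [sum2] at this
    omega
  have hΦb : Φ K (∑ d ∈ f.support, (coeff d f) • (wX K ^ (d 0) * wD K ^ (d 1))) = f := by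
    rw [map_sum]
    conv_rhs => rw [as_sum f]
    apply Finset.sum_congr rfl
    intro d _
    rw [map_smul, Φ_mono, mono_eq]
  have := Φ_inj K hΦb
  rwa [this] at hb

lemma wdeg_eq (a : Weyl K) : wdeg K a = (Φ K a).totalDegree := by
  have h1 : {n : ℕ | a ∈ FF K n} = Set.Ici (Φ K a).totalDegree := by
    ext n
    simp [Set.mem_Ici, FF_iff]
  rw [show wdeg K a = sInf {n : ℕ | a ∈ FF K n} from rfl, h1, csInf_Ici]

end W5
namespace W5
open MvPolynomial
variable (K : Type*) [Field K]

lemma hc_XX (a b n : ℕ) :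
    homogeneousComponent n (X 0 ^ a * X 1 ^ b : P K)
      = if n = a + b then (X 0 ^ a * X 1 ^ b : P K) else 0 := by
  have hmem : ((X 0 : P K) ^ a * X 1 ^ b).IsHomogeneous (a + b) := by
    simpa using ((isHomogeneous_X K (0 : Fin 2)).pow a).mul ((isHomogeneous_X K 1).pow b)
  exact homogeneousComponent_of_mem ((mem_homogeneousSubmodule _ _).2 hmem)

lemma hc_top_ne_zero {f : P K} (hf : f ≠ 0) :
    homogeneousComponent f.totalDegree f ≠ 0 := by
  obtain ⟨d, hd, hsum⟩ := Finset.exists_mem_eq_sup f.support (support_nonempty.2 hf)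
    (fun s => s.sum fun _ e => e)
  intro h
  have hco := coeff_homogeneousComponent f.totalDegree f d
  rw [h] at hco
  have hdeg : d.degree = f.totalDegree := by
    rw [show d.degree = d.sum fun _ e => e from rfl, ← hsum]; rfl
  rw [if_pos hdeg] at hco
  exact (mem_support_iff.1 hd) hco.symm

/-- the key multiplicativity of leading terms -/
lemma hc_mul {m n : ℕ} {a b : Weyl K} (ha : a ∈ FF K m) (hb : b ∈ FF K n) :
    homogeneousComponent (m + n) (Φ K (a * b))
      = homogeneousComponent m (Φ K a) * homogeneousComponent n (Φ K b) := by
  induction ha using Submodule.span_induction with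
  | mem w hw =>
    obtain ⟨i, j, hij, rfl⟩ := hw
    induction hb using Submodule.span_induction with
    | mem w' hw' =>
      obtain ⟨k, l, hkl, rfl⟩ := hw'
      rcases Nat.eq_zero_or_pos (m + n) with h0 | h0
      · obtain ⟨rfl, rfl, rfl, rfl⟩ : i = 0 ∧ j = 0 ∧ k = 0 ∧ l = 0 := by omega
        obtain ⟨rfl, rfl⟩ : m = 0 ∧ n = 0 := by omega
        simp only [pow_zero, one_mul, Φ_one, Nat.add_zero]
        rw [homogeneousComponent_zero]
        simp
      · set r := (wX K ^ i * wD K ^ j) * (wX K ^ k * wD K ^ l)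
          - wX K ^ (i+k) * wD K ^ (j+l) with hr
        have hrmem := mul_gen_sub K i j k l
        have hsplit : (wX K ^ i * wD K ^ j) * (wX K ^ k * wD K ^ l)
            = wX K ^ (i+k) * wD K ^ (j+l) + r := by rw [hr]; abel
        rw [hsplit, map_add, map_add]
        have hrz : homogeneousComponent (m + n) (Φ K r) = 0 := by
          apply homogeneousComponent_eq_zero
          have := Φ_FF K hrmem
          rw [← hr] at this
          omega
        rw [hrz, add_zero, Φ_mono, Φ_mono, Φ_mono, hc_XX, hc_XX, hc_XX]
        by_cases hcase : i + j = m ∧ k + l = n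
        · rw [if_pos (by omega), if_pos hcase.1.symm, if_pos hcase.2.symm]
          rw [pow_add, pow_add]
          ring
        · rw [if_neg (by omega)]
          by_cases h1 : m = i + j
          · rw [if_pos h1, if_neg (by omega), mul_zero]
          · rw [if_neg h1, zero_mul]
    | zero => simp
    | add x y hx hy ihx ihy => simp only [mul_add, map_add, ihx, ihy]
    | smul c x hx ihx => simp only [mul_smul_comm, map_smul, ihx, smul_mul_assoc]
  | zero => simp
  | add x y hx hy ihx ihy => simp only [add_mul, map_add, ihx, ihy]
  | smul c x hx ihx => simp only [smul_mul_assoc, map_smul, ihx]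

lemma wdeg_mul {a b : Weyl K} (ha : a ≠ 0) (hb : b ≠ 0) :
    a * b ≠ 0 ∧ wdeg K (a * b) = wdeg K a + wdeg K b := by
  set m := (Φ K a).totalDegree with hm
  set n := (Φ K b).totalDegree with hn
  have hma : a ∈ FF K m := (FF_iff K).2 (le_refl _)
  have hnb : b ∈ FF K n := (FF_iff K).2 (le_refl _)
  have hub : (Φ K (a * b)).totalDegree ≤ m + n := Φ_FF K (FF_mul K hma hnb)
  have hcc : homogeneousComponent (m + n) (Φ K (a * b))
      = homogeneousComponent m (Φ K a) * homogeneousComponent n (Φ K b) :=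
    hc_mul K hma hnb
  have hne : homogeneousComponent (m + n) (Φ K (a * b)) ≠ 0 := by
    rw [hcc]
    exact mul_ne_zero (hc_top_ne_zero K (Φ_ne_zero K ha)) (hc_top_ne_zero K (Φ_ne_zero K hb))
  have habne : a * b ≠ 0 := by
    intro h
    rw [h, map_zero, map_zero] at hne
    exact hne rfl
  refine ⟨habne, ?_⟩
  have hlb : m + n ≤ (Φ K (a * b)).totalDegree := by
    by_contra hlt
    exact hne (homogeneousComponent_eq_zero _ _ (by omega))
  rw [wdeg_eq, wdeg_eq, wdeg_eq, ← hm, ← hn]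
  omega

lemma wdeg_pow {a : Weyl K} (ha : a ≠ 0) (n : ℕ) :
    a ^ n ≠ 0 ∧ wdeg K (a ^ n) = n * wdeg K a := by
  induction n with
  | zero =>
    refine ⟨?_, ?_⟩
    · rw [pow_zero]
      intro h
      have := congrArg (Φ K) h
      rw [Φ_one, map_zero] at this
      exact one_ne_zero this
    rw [pow_zero, wdeg_eq, Φ_one, totalDegree_one, zero_mul]
  | succ n ih =>
    obtain ⟨h1, h2⟩ := ih
    obtain ⟨h3, h4⟩ := wdeg_mul K h1 ha
    rw [pow_succ]
    exact ⟨h3, by rw [h4, h2]; ring⟩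

end W5
namespace W5
open MvPolynomial
variable (K : Type*) [Field K]

lemma smul_sum2 (p : ℕ) (d : Fin 2 →₀ ℕ) :
    ((p • d).sum fun _ e => e) = p * (d.sum fun _ e => e) := by
  rw [sum2, sum2, Finsupp.smul_apply, Finsupp.smul_apply, smul_eq_mul, smul_eq_mul]
  ring

lemma deg_pmap (p : ℕ) (hp : 0 < p) (χ : P K →ₐ[K] Weyl K)
    (h0 : χ (X 0) = wX K ^ p) (h1 : χ (X 1) = wD K ^ p) (F : P K) :
    (Φ K (χ F)).totalDegree = p * F.totalDegree := by
  have hmono : ∀ (d : Fin 2 →₀ ℕ) (c : K),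
      Φ K (χ (monomial d c)) = monomial (p • d) c := by
    intro d c
    rw [mono_eq, map_smul, map_mul, map_pow, map_pow, h0, h1, ← pow_mul, ← pow_mul,
      map_smul, Φ_mono, mono_eq]
    congr 2 <;> simp [Finsupp.smul_apply]
  have hrepr : Φ K (χ F) = ∑ d ∈ F.support, monomial (p • d) (coeff d F) := by
    conv_lhs => rw [as_sum F]
    rw [map_sum, map_sum]
    exact Finset.sum_congr rfl fun d _ => hmono d _
  by_cases hF : F = 0
  · simp [hF]
  apply le_antisymm
  · rw [hrepr]
    refine le_trans (totalDegree_finset_sum _ _) ?_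
    apply Finset.sup_le
    intro d hd
    refine le_trans (totalDegree_monomial_le _ _) ?_
    exact le_of_eq_of_le (smul_sum2 p d) (Nat.mul_le_mul_left p (le_totalDegree hd))
  · obtain ⟨d, hd, hsum⟩ := Finset.exists_mem_eq_sup F.support (support_nonempty.2 hF)
      (fun s => s.sum fun _ e => e)
    have hco : coeff (p • d) (Φ K (χ F)) = coeff d F := by
      rw [hrepr, coeff_sum, Finset.sum_eq_single d]
      · rw [coeff_monomial, if_pos rfl]
      · intro d' _ hne
        rw [coeff_monomial, if_neg]
        intro h
        apply hne
        ext i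
        have h2 : (p • d') i = (p • d) i := by rw [h]
        simp only [Finsupp.smul_apply, smul_eq_mul] at h2
        exact Nat.eq_of_mul_eq_mul_left hp h2
      · intro hdd; exact absurd hd hdd
    have hne : coeff (p • d) (Φ K (χ F)) ≠ 0 := by rw [hco]; exact mem_support_iff.1 hd
    have hle := le_totalDegree (mem_support_iff.2 hne)
    have h3 : ((p • d).sum fun _ e => e) = p * F.totalDegree := by
      rw [smul_sum2, show F.totalDegree = d.sum fun _ e => e from hsum]
    rw [← h3]
    exact hle

lemma Φ_wX : Φ K (wX K) = X 0 := by simpa using Φ_mono K 1 0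

lemma Φ_wD : Φ K (wD K) = X 1 := by simpa using Φ_mono K 0 1

lemma wX_ne_zero : wX K ≠ 0 := by
  intro h
  have h2 := congrArg (Φ K) h
  rw [map_zero, Φ_wX] at h2
  exact X_ne_zero _ h2

lemma wD_ne_zero : wD K ≠ 0 := by
  intro h
  have h2 := congrArg (Φ K) h
  rw [map_zero, Φ_wD] at h2
  exact X_ne_zero _ h2

end W5

theorem statement5 (p : ℕ) (hp : p.Prime) (K : Type*) [Field K] [CharP K p]
    (hperf : Function.Surjective fun a : K => a ^ p)
    (ψ : MvPolynomial (Fin 2) K ≃ₐ[K] Subalgebra.center K (Weyl K))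
    (hψX : (↑(ψ (MvPolynomial.X 0)) : Weyl K) = wX K ^ p)
    (hψY : (↑(ψ (MvPolynomial.X 1)) : Weyl K) = wD K ^ p)
    (σ : Weyl K ≃ₐ[K] Weyl K)
    (hX : σ (wX K ^ p) ∈ Subalgebra.center K (Weyl K))
    (hY : σ (wD K ^ p) ∈ Subalgebra.center K (Weyl K)) :
    max (ψ.symm ⟨σ (wX K ^ p), hX⟩).totalDegree (ψ.symm ⟨σ (wD K ^ p), hY⟩).totalDegree
      = max (wdeg K (σ (wX K))) (wdeg K (σ (wD K))) := by
  have hp0 : 0 < p := hp.pos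
  set F := ψ.symm ⟨σ (wX K ^ p), hX⟩ with hF
  set G := ψ.symm ⟨σ (wD K ^ p), hY⟩ with hG
  set χ : MvPolynomial (Fin 2) K →ₐ[K] Weyl K :=
    ((Subalgebra.center K (Weyl K)).val).comp ψ.toAlgHom with hχ
  have hχ0 : χ (MvPolynomial.X 0) = wX K ^ p := hψX
  have hχ1 : χ (MvPolynomial.X 1) = wD K ^ p := hψY
  have hχF : χ F = σ (wX K ^ p) := by
    show ((ψ (ψ.symm ⟨σ (wX K ^ p), hX⟩) : Subalgebra.center K (Weyl K)) : Weyl K) = _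
    rw [AlgEquiv.apply_symm_apply]
  have hχG : χ G = σ (wD K ^ p) := by
    show ((ψ (ψ.symm ⟨σ (wD K ^ p), hY⟩) : Subalgebra.center K (Weyl K)) : Weyl K) = _
    rw [AlgEquiv.apply_symm_apply]
  have hxne : σ (wX K) ≠ 0 := fun h =>
    W5.wX_ne_zero K (by apply σ.injective; rw [h, map_zero])
  have hdne : σ (wD K) ≠ 0 := fun h =>
    W5.wD_ne_zero K (by apply σ.injective; rw [h, map_zero])
  have e1 : wdeg K (σ (wX K ^ p)) = p * wdeg K (σ (wX K)) := by
    rw [map_pow]; exact (W5.wdeg_pow K hxne p).2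
  have e2 : wdeg K (σ (wX K ^ p)) = p * F.totalDegree := by
    rw [← hχF, show wdeg K (χ F) = (W5.Φ K (χ F)).totalDegree from W5.wdeg_eq K _,
      W5.deg_pmap K p hp0 χ hχ0 hχ1]
  have e3 : wdeg K (σ (wD K ^ p)) = p * wdeg K (σ (wD K)) := by
    rw [map_pow]; exact (W5.wdeg_pow K hdne p).2
  have e4 : wdeg K (σ (wD K ^ p)) = p * G.totalDegree := by
    rw [← hχG, show wdeg K (χ G) = (W5.Φ K (χ G)).totalDegree from W5.wdeg_eq K _,
      W5.deg_pmap K p hp0 χ hχ0 hχ1]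
  have hFd : F.totalDegree = wdeg K (σ (wX K)) := Nat.eq_of_mul_eq_mul_left hp0 (by omega)
  have hGd : G.totalDegree = wdeg K (σ (wD K)) := Nat.eq_of_mul_eq_mul_left hp0 (by omega)
  rw [hFd, hGd]
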